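/- Let P be a finite poset, let T ⊆ H_P be a line connected subgraph that is a tree, let P_T be the sub-poset generated by T, and let M, N be kP-modules such that there is a natural isomorphism φ*(M_T) ⊕ β*(N_T) ≅ φ*(N_T) ⊕ β*(M_T) of functors on the line poset of P_T (i.e. the virtual module [M] − [N] has vanishing gradient on T). Then: (a) the integer dim_k M(x) − dim_k N(x) is the same for all elements x of P_T; and (b) the integer rank M(u ≤ v) − rank N(u ≤ v) is the same for all covering relations u ⋖ v of P_T. -/
import Mathlib


/-!
STATEMENT 4: If the virtual module `[M] − [N]` has vanishing gradient on a line connected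
tree `T ⊆ H_P`, then (a) `dim M(x) − dim N(x)` is constant on the elements of `P_T`, and
(b) `rk M(u≤v) − rk N(u≤v)` is constant on the covering relations of `P_T`.
-/


/-- A `kP`-module: a functor from the poset `P` to finite dimensional
`k`-vector spaces, given by concrete data. -/
structure PModule (k : Type) (P : Type) [Field k] [Preorder P] where
  V : P → Type
  [acg : ∀ x, AddCommGroup (V x)]
  [mod : ∀ x, Module k (V x)]
  [fd : ∀ x, FiniteDimensional k (V x)]
  map : ∀ {x y : P}, x ≤ y → (V x →ₗ[k] V y)
  map_id : ∀ x : P, map (le_refl x) = LinearMap.id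
  map_comp : ∀ {x y z : P} (h₁ : x ≤ y) (h₂ : y ≤ z), map (h₁.trans h₂) = (map h₂).comp (map h₁)

attribute [instance] PModule.acg PModule.mod PModule.fd

/-- The order relation of the sub-poset `P_T` generated by the edge set `Te` on the
vertex set `Tv`: the reflexive-transitive closure of the edge relation of `T`. -/
def ptle {P : Type} [PartialOrder P] (Tv : Set P) (Te : Set (P × P)) (a b : ↥Tv) : Prop :=
  Relation.ReflTransGen (fun x y : ↥Tv => ((x : P), (y : P)) ∈ Te) a b

/-- The strict order relation of the sub-poset `P_T`. -/
def ptlt {P : Type} [PartialOrder P] (Tv : Set P) (Te : Set (P × P)) (a b : ↥Tv) : Prop :=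
  ptle Tv Te a b ∧ ¬ ptle Tv Te b a

/-- The covering relation of the sub-poset `P_T`. -/
def ptcov {P : Type} [PartialOrder P] (Tv : Set P) (Te : Set (P × P)) (a b : ↥Tv) : Prop :=
  ptlt Tv Te a b ∧ ∀ c : ↥Tv, ptlt Tv Te a c → ¬ ptlt Tv Te c b

/-- The order relation of the line poset of `P_T`, whose elements are the edges of `T`:
`e ≤ f` iff there is a chain of consecutive edges from `e` to `f`. -/
def tline {P : Type} [PartialOrder P] (Te : Set (P × P)) (e f : ↥Te) : Prop :=
  Relation.ReflTransGen (fun a b : ↥Te => (a : P × P).2 = (b : P × P).1) e f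

/-- Auxiliary: a submodule product is equivalent to the product of submodules. -/
def subProdEquiv {R A B : Type*} [Ring R] [AddCommGroup A] [AddCommGroup B]
    [Module R A] [Module R B] (p : Submodule R A) (q : Submodule R B) :
    (p.prod q) ≃ₗ[R] p × q where
  toFun x := (⟨x.val.1, x.prop.1⟩, ⟨x.val.2, x.prop.2⟩)
  invFun x := ⟨(x.1.val, x.2.val), ⟨x.1.prop, x.2.prop⟩⟩
  map_add' _ _ := rfl
  map_smul' _ _ := rfl
  left_inv _ := rfl
  right_inv _ := rfl

lemma range_prodMap' {R A B C D : Type*} [Field R] [AddCommGroup A] [AddCommGroup B]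
    [AddCommGroup C] [AddCommGroup D] [Module R A] [Module R B] [Module R C] [Module R D]
    (f : A →ₗ[R] B) (g : C →ₗ[R] D) :
    LinearMap.range (f.prodMap g) = (LinearMap.range f).prod (LinearMap.range g) := by
  ext ⟨x, y⟩
  constructor
  · rintro ⟨⟨a, c⟩, h⟩
    exact ⟨⟨a, congrArg Prod.fst h⟩, ⟨c, congrArg Prod.snd h⟩⟩
  · rintro ⟨⟨a, ha⟩, ⟨c, hc⟩⟩
    exact ⟨(a, c), by simp [ha, hc]⟩

lemma finrank_range_prodMap {R A B C D : Type*} [Field R] [AddCommGroup A] [AddCommGroup B]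
    [AddCommGroup C] [AddCommGroup D] [Module R A] [Module R B] [Module R C] [Module R D]
    [FiniteDimensional R B] [FiniteDimensional R D]
    (f : A →ₗ[R] B) (g : C →ₗ[R] D) :
    Module.finrank R (LinearMap.range (f.prodMap g))
      = Module.finrank R (LinearMap.range f) + Module.finrank R (LinearMap.range g) := by
  rw [range_prodMap']
  rw [LinearEquiv.finrank_eq (subProdEquiv (LinearMap.range f) (LinearMap.range g))]
  exact Module.finrank_prod

/-- Key step for part (b): naturality across two consecutive edges forces the
rank difference to agree. -/
lemma step_b {k P : Type} [Field k] [PartialOrder P] (M N : PModule k P)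
    {a b c : P} (hab : a ≤ b) (hbc : b ≤ c)
    (η₁ : (M.V b × N.V a) ≃ₗ[k] (N.V b × M.V a))
    (η₂ : (M.V c × N.V b) ≃ₗ[k] (N.V c × M.V b))
    (hnat : η₂.toLinearMap.comp (LinearMap.prodMap (M.map hbc) (N.map hab)) =
            (LinearMap.prodMap (N.map hbc) (M.map hab)).comp η₁.toLinearMap) :
    (Module.finrank k (LinearMap.range (M.map hab)) : ℤ)
        - Module.finrank k (LinearMap.range (N.map hab))
      = (Module.finrank k (LinearMap.range (M.map hbc)) : ℤ)
        - Module.finrank k (LinearMap.range (N.map hbc)) := by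
  have h1 : Module.finrank k
      (LinearMap.range (η₂.toLinearMap.comp (LinearMap.prodMap (M.map hbc) (N.map hab))))
      = Module.finrank k (LinearMap.range (M.map hbc))
        + Module.finrank k (LinearMap.range (N.map hab)) := by
    rw [LinearMap.range_comp, LinearEquiv.finrank_map_eq, finrank_range_prodMap]
  have h2 : Module.finrank k
      (LinearMap.range ((LinearMap.prodMap (N.map hbc) (M.map hab)).comp η₁.toLinearMap))
      = Module.finrank k (LinearMap.range (N.map hbc))
        + Module.finrank k (LinearMap.range (M.map hab)) := by
    rw [LinearMap.range_comp_of_range_eq_top _ (LinearEquiv.range η₁), finrank_range_prodMap]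
  rw [hnat] at h1
  rw [h2] at h1
  omega

theorem statement4 (k : Type) [Field k] (P : Type) [Fintype P] [PartialOrder P]
    (Tv : Set P) (Te : Set (P × P))
    -- `T` is a subgraph of the Hasse diagram `H_P`, with vertex set `Tv` and edge set `Te`
    (hTe : ∀ e ∈ Te, (e.1 ⋖ e.2) ∧ e.1 ∈ Tv ∧ e.2 ∈ Tv)
    -- `T` is a tree: its underlying undirected graph is connected and acyclic
    (htree : (SimpleGraph.fromRel (fun a b : ↥Tv => ((a : P), (b : P)) ∈ Te)).IsTree)
    -- `T` is line connected: the line digraph of `T` is connected as an undirected graph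
    (hlc : (SimpleGraph.fromRel (fun e f : ↥Te => (e : P × P).2 = (f : P × P).1)).Connected)
    (M N : PModule k P)
    -- `[M] − [N]` has vanishing gradient on `T`:
    -- a natural isomorphism `φ*(M_T) ⊕ β*(N_T) ≅ φ*(N_T) ⊕ β*(M_T)`
    (hgrad : ∃ η : ∀ e : ↥Te,
        ((M.V (e : P × P).2 × N.V (e : P × P).1) ≃ₗ[k] (N.V (e : P × P).2 × M.V (e : P × P).1)),
      ∀ (e f : ↥Te), tline Te e f →
        ∀ (h0 : (e : P × P).1 ≤ (f : P × P).1) (h1 : (e : P × P).2 ≤ (f : P × P).2),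
          (η f).toLinearMap.comp (LinearMap.prodMap (M.map h1) (N.map h0)) =
            (LinearMap.prodMap (N.map h1) (M.map h0)).comp ((η e).toLinearMap)) :
    -- (a) `dim M(x) − dim N(x)` is the same for all elements of `P_T`
    (∀ x y : ↥Tv,
      (Module.finrank k (M.V (x : P)) : ℤ) - (Module.finrank k (N.V (x : P)) : ℤ)
        = (Module.finrank k (M.V (y : P)) : ℤ) - (Module.finrank k (N.V (y : P)) : ℤ)) ∧
    -- (b) `rk M(u≤v) − rk N(u≤v)` is the same for all covering relations of `P_T`
    (∀ u v s t : ↥Tv, ptcov Tv Te u v → ptcov Tv Te s t →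
      ∀ (h : (u : P) ≤ (v : P)) (h' : (s : P) ≤ (t : P)),
        (Module.finrank k (LinearMap.range (M.map h)) : ℤ)
            - (Module.finrank k (LinearMap.range (N.map h)) : ℤ)
          = (Module.finrank k (LinearMap.range (M.map h')) : ℤ)
            - (Module.finrank k (LinearMap.range (N.map h')) : ℤ)) := by
  obtain ⟨η, hnat⟩ := hgrad
  -- `ptle` implies `≤` in `P`
  have hle : ∀ a b : ↥Tv, ptle Tv Te a b → (a : P) ≤ (b : P) := by
    intro a b h
    induction h with
    | refl => exact le_refl _
    | tail _ h2 ih => exact ih.trans (hTe _ h2).1.le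
  -- `ptlt` implies `<` in `P`
  have hlt : ∀ a b : ↥Tv, ptlt Tv Te a b → (a : P) < (b : P) := by
    intro a b h
    refine lt_of_le_of_ne (hle a b h.1) ?_
    intro heq
    have hab : a = b := Subtype.ext heq
    subst hab
    exact h.2 Relation.ReflTransGen.refl
  -- a covering relation of `P_T` is an edge of `T`
  have hcov_edge : ∀ u v : ↥Tv, ptcov Tv Te u v → ((u : P), (v : P)) ∈ Te := by
    intro u v hc
    have huv : (u : P) < (v : P) := hlt u v hc.1
    rcases Relation.ReflTransGen.cases_head hc.1.1 with heq | ⟨c, hc1, hc2⟩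
    · exact absurd (congrArg Subtype.val heq) huv.ne
    · by_cases hcv : c = v
      · rw [← hcv]; exact hc1
      · exfalso
        have hcltv : (c : P) < (v : P) :=
          lt_of_le_of_ne (hle c v hc2) (fun h => hcv (Subtype.ext h))
        have hulc : (u : P) < (c : P) := (hTe _ hc1).1.lt
        have h1 : ptlt Tv Te u c :=
          ⟨Relation.ReflTransGen.single hc1, fun h => absurd (hle c u h) hulc.not_ge⟩
        have h2 : ptlt Tv Te c v :=
          ⟨hc2, fun h => absurd (hle v c h) hcltv.not_ge⟩
        exact hc.2 c h1 h2
  constructor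
  · -- part (a)
    have step : ∀ x y : ↥Tv, ((x : P), (y : P)) ∈ Te →
        (Module.finrank k (M.V (x : P)) : ℤ) - (Module.finrank k (N.V (x : P)) : ℤ)
          = (Module.finrank k (M.V (y : P)) : ℤ) - (Module.finrank k (N.V (y : P)) : ℤ) := by
      intro x y hxy
      have h0 := LinearEquiv.finrank_eq (η ⟨((x : P), (y : P)), hxy⟩)
      rw [Module.finrank_prod, Module.finrank_prod] at h0
      have h1 : Module.finrank k (M.V (y : P)) + Module.finrank k (N.V (x : P))
          = Module.finrank k (N.V (y : P)) + Module.finrank k (M.V (x : P)) := h0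
      omega
    intro x y
    obtain ⟨w⟩ := htree.isConnected.preconnected x y
    induction w with
    | nil => rfl
    | cons hadj p ih =>
      rw [SimpleGraph.fromRel_adj] at hadj
      rcases hadj.2 with h1 | h1
      · exact (step _ _ h1).trans ih
      · exact ((step _ _ h1).symm).trans ih
  · -- part (b)
    -- the rank difference associated to an edge of `T`
    set R : ↥Te → ℤ := fun e =>
      (Module.finrank k (LinearMap.range (M.map (hTe e.val e.prop).1.le)) : ℤ)
        - Module.finrank k (LinearMap.range (N.map (hTe e.val e.prop).1.le)) with hR
    have key : ∀ e f : ↥Te, (e : P × P).2 = (f : P × P).1 → R e = R f := by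
      rintro ⟨⟨a, b⟩, he⟩ ⟨⟨b', c⟩, hf⟩ hh
      simp only at hh
      subst hh
      have hab : a ≤ b := (hTe (a, b) he).1.le
      have hbc : b ≤ c := (hTe (b, c) hf).1.le
      have hnat' := hnat ⟨(a, b), he⟩ ⟨(b, c), hf⟩
        (Relation.ReflTransGen.single rfl) hab hbc
      exact step_b M N hab hbc (η ⟨(a, b), he⟩) (η ⟨(b, c), hf⟩) hnat'
    have hconst : ∀ e f : ↥Te, R e = R f := by
      intro e f
      obtain ⟨w⟩ := hlc.preconnected e f
      induction w with
      | nil => rfl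
      | cons hadj p ih =>
        rw [SimpleGraph.fromRel_adj] at hadj
        rcases hadj.2 with h1 | h1
        · exact (key _ _ h1).trans ih
        · exact ((key _ _ h1).symm).trans ih
    intro u v s t hcuv hcst h h'
    have e1 : ((u : P), (v : P)) ∈ Te := hcov_edge u v hcuv
    have e2 : ((s : P), (t : P)) ∈ Te := hcov_edge s t hcst
    exact hconst ⟨((u : P), (v : P)), e1⟩ ⟨((s : P), (t : P)), e2⟩
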